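/- arXiv:1102.1842 — 2 statements merged into one kernel-verified Lean document; each statement's English description precedes it below -/
import Mathlib

section
/- Let {M_t, t≥0} be a square-integrable martingale with M₀ = 0 and increments Z_n = M_n − M_{n-1} satisfying sup_n E[Z_n²] < ∞ and E[⟨M⟩_N]/N → σ². Then for every ε > 0, lim_{N→∞} P[ sup_{T∈[N,N+1)} |M_T/√T − M_N/√N| ≥ ε ] = 0. -/
open MeasureTheory Filter
open scoped Topology NNReal ENNReal

section Doob
variable {Ω : Type*} {m0 : MeasurableSpace Ω} (Pr : Measure Ω)
    [IsProbabilityMeasure Pr]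
    (𝒢 : MeasureTheory.Filtration ℝ≥0 m0)
    (M : ℝ≥0 → Ω → ℝ)

/-- Integrability of squared increments. -/
lemma int_sq_sub (hmart : Martingale M 𝒢 Pr)
    (hsq : ∀ t : ℝ≥0, Integrable (fun ω => (M t ω) ^ 2) Pr) (s t : ℝ≥0) :
    Integrable (fun ω => (M t ω - M s ω) ^ 2) Pr := by
  have smt : StronglyMeasurable (M t) := (hmart.stronglyAdapted t).mono (𝒢.le t)
  have sms : StronglyMeasurable (M s) := (hmart.stronglyAdapted s).mono (𝒢.le s)
  refine Integrable.mono' (((hsq t).add (hsq s)).const_mul 2) ?_ ?_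
  · exact ((smt.sub sms).pow 2).aestronglyMeasurable
  · filter_upwards with ω
    simp only [Real.norm_eq_abs, Pi.add_apply]
    rw [abs_of_nonneg (sq_nonneg _)]
    nlinarith [sq_nonneg (M t ω + M s ω)]

/-- Integrability of products of increments. -/
lemma int_mul_sub (hmart : Martingale M 𝒢 Pr)
    (hsq : ∀ t : ℝ≥0, Integrable (fun ω => (M t ω) ^ 2) Pr) (s t u v : ℝ≥0) :
    Integrable (fun ω => (M t ω - M s ω) * (M v ω - M u ω)) Pr := by
  have smf : ∀ r : ℝ≥0, StronglyMeasurable (M r) := fun r => (hmart.stronglyAdapted r).mono (𝒢.le r)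
  refine Integrable.mono'
    ((int_sq_sub Pr 𝒢 M hmart hsq s t).add (int_sq_sub Pr 𝒢 M hmart hsq u v)) ?_ ?_
  · exact (((smf t).sub (smf s)).mul ((smf v).sub (smf u))).aestronglyMeasurable
  · filter_upwards with ω
    simp only [Real.norm_eq_abs, Pi.add_apply]
    set x := M t ω - M s ω
    set y := M v ω - M u ω
    have h := abs_mul x y
    nlinarith [sq_nonneg (|x| - |y|), sq_abs x, sq_abs y, abs_nonneg x, abs_nonneg y,
      abs_nonneg (x*y)]

/-- Doob's L² maximal inequality over a finite set of times. -/
lemma doob_l2 (hmart : Martingale M 𝒢 Pr)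
    (hsq : ∀ t : ℝ≥0, Integrable (fun ω => (M t ω) ^ 2) Pr)
    (a b : ℝ≥0) (F : Finset ℝ≥0) (hF : ∀ t ∈ F, a ≤ t ∧ t ≤ b)
    (hab : a ≤ b) (δ : ℝ≥0) (hδ : 0 < δ) :
    Pr {ω | ∃ t ∈ F, (δ:ℝ) ≤ |M t ω - M a ω|} ≤
      ENNReal.ofReal (∫ ω, (M b ω - M a ω) ^ 2 ∂Pr) / ((δ^2 : ℝ≥0) : ℝ≥0∞) := by
  classical
  set s : Finset ℝ≥0 := insert b F with hs
  have hmem : ∀ t ∈ s, a ≤ t ∧ t ≤ b := by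
    intro t ht
    rcases Finset.mem_insert.mp ht with h | h
    · subst h; exact ⟨hab, le_rfl⟩
    · exact hF t h
  set n : ℕ := s.card with hn
  set τ : ℕ → ℝ≥0 := fun k => if h : k < s.card then ((s.orderIsoOfFin rfl ⟨k, h⟩ : s) : ℝ≥0) else b
    with hτdef
  have hτ_mem : ∀ k, τ k ∈ s := by
    intro k
    by_cases h : k < s.card
    · simp only [hτdef, dif_pos h]; exact (s.orderIsoOfFin rfl ⟨k, h⟩).2
    · simp only [hτdef, dif_neg h]; exact Finset.mem_insert_self _ _
  have hτ_ab : ∀ k, a ≤ τ k ∧ τ k ≤ b := fun k => hmem _ (hτ_mem k)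
  have hτ_mono : Monotone τ := by
    intro i j hij
    by_cases hi : i < s.card
    · by_cases hj : j < s.card
      · simp only [hτdef, dif_pos hi, dif_pos hj]
        exact_mod_cast (s.orderIsoOfFin rfl).monotone (show (⟨i, hi⟩ : Fin s.card) ≤ ⟨j, hj⟩ from hij)
      · simp only [hτdef, dif_pos hi, dif_neg hj]
        exact (hmem _ (s.orderIsoOfFin rfl ⟨i, hi⟩).2).2
    · have hj : ¬ j < s.card := fun hj => hi (lt_of_le_of_lt hij hj)
      simp only [hτdef, dif_neg hi, dif_neg hj, le_refl]
  have hτ_n : τ n = b := by simp only [hτdef, hn, dif_neg (lt_irrefl s.card)]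
  set ℱ : MeasureTheory.Filtration ℕ m0 :=
    ⟨fun k => 𝒢 (τ k), fun i j hij => 𝒢.mono (hτ_mono hij), fun k => 𝒢.le _⟩ with hℱ
  set f : ℕ → Ω → ℝ := fun k ω => (M (τ k) ω - M a ω) ^ 2 with hfdef
  have hadp : StronglyAdapted ℱ f := fun k =>
    ((hmart.stronglyAdapted (τ k)).sub ((hmart.stronglyAdapted a).mono (𝒢.mono (hτ_ab k).1))).pow 2
  have hint : ∀ k, Integrable (f k) Pr := fun k => int_sq_sub Pr 𝒢 M hmart hsq a (τ k)
  have hsubm : Submartingale f ℱ Pr := by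
    refine ⟨hadp, fun i j hij => ?_, hint⟩
    have hττ : τ i ≤ τ j := hτ_mono hij
    set g : Ω → ℝ := fun ω => M (τ i) ω - M a ω with hg
    set d : Ω → ℝ := fun ω => M (τ j) ω - M (τ i) ω with hd
    have hgsm : StronglyMeasurable[𝒢 (τ i)] g :=
      (hmart.stronglyAdapted (τ i)).sub ((hmart.stronglyAdapted a).mono (𝒢.mono (hτ_ab i).1))
    have int_g2 : Integrable (fun ω => g ω ^ 2) Pr := int_sq_sub Pr 𝒢 M hmart hsq a (τ i)
    have int_d2 : Integrable (fun ω => d ω ^ 2) Pr := int_sq_sub Pr 𝒢 M hmart hsq (τ i) (τ j)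
    have int_gd : Integrable (fun ω => (2 * g ω) * d ω) Pr := by
      have h := (int_mul_sub Pr 𝒢 M hmart hsq a (τ i) (τ i) (τ j)).const_mul 2
      refine h.congr ?_
      filter_upwards with ω; simp only [hg, hd]; ring
    have int_d : Integrable d Pr := (hmart.integrable (τ j)).sub (hmart.integrable (τ i))
    have hd0 : Pr[d | 𝒢 (τ i)] =ᵐ[Pr] 0 := by
      have h1 : Pr[d | 𝒢 (τ i)] =ᵐ[Pr]
          Pr[M (τ j) | 𝒢 (τ i)] - Pr[M (τ i) | 𝒢 (τ i)] := by
        have : d = M (τ j) - M (τ i) := rfl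
        rw [this]
        exact condExp_sub (hmart.integrable (τ j)) (hmart.integrable (τ i)) _
      have h2 := hmart.condExp_ae_eq hττ
      have h3 : Pr[M (τ i)|𝒢 (τ i)] = M (τ i) :=
        condExp_of_stronglyMeasurable (𝒢.le _) (hmart.stronglyAdapted (τ i)) (hmart.integrable _)
      filter_upwards [h1, h2] with ω e1 e2
      simp only [Pi.sub_apply, Pi.zero_apply] at *
      rw [e1, e2, h3, sub_self]
    have e1 : Pr[f j | 𝒢 (τ i)] =ᵐ[Pr]
        Pr[(fun ω => g ω ^ 2) | 𝒢 (τ i)] + (Pr[(fun ω => (2 * g ω) * d ω) | 𝒢 (τ i)]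
          + Pr[(fun ω => d ω ^ 2) | 𝒢 (τ i)]) := by
      have hfj : f j = (fun ω => g ω ^ 2) +
          ((fun ω => (2 * g ω) * d ω) + (fun ω => d ω ^ 2)) := by
        funext ω
        simp only [hfdef, Pi.add_apply, hg, hd]
        ring
      rw [hfj]
      refine (condExp_add int_g2 (int_gd.add int_d2) _).trans ?_
      filter_upwards [condExp_add int_gd int_d2 _] with ω h
      simp only [Pi.add_apply] at *
      rw [h]
    have e2 : Pr[(fun ω => g ω ^ 2) | 𝒢 (τ i)] = fun ω => g ω ^ 2 :=
      condExp_of_stronglyMeasurable (𝒢.le _) (hgsm.pow 2) int_g2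
    have e3 : Pr[(fun ω => (2 * g ω) * d ω) | 𝒢 (τ i)] =ᵐ[Pr]
        (fun ω => 2 * g ω) * Pr[d | 𝒢 (τ i)] := by
      have := condExp_mul_of_stronglyMeasurable_left (μ := Pr) (m := 𝒢 (τ i))
        (f := fun ω => 2 * g ω) (g := d) (hgsm.const_mul 2) ?_ int_d
      · exact this
      · exact int_gd.congr (by filter_upwards with ω; rfl)
    have e4 : (0 : Ω → ℝ) ≤ᵐ[Pr] Pr[(fun ω => d ω ^ 2) | 𝒢 (τ i)] :=
      condExp_nonneg (Filter.Eventually.of_forall fun ω => sq_nonneg _)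
    filter_upwards [e1, e3, hd0, e4] with ω h1 h3 h0 h4
    simp only [Pi.add_apply, Pi.mul_apply] at h1 h3
    have h0' : (Pr[d | 𝒢 (τ i)]) ω = (0:ℝ) := h0
    have h4' : (0:ℝ) ≤ (Pr[fun ω => d ω ^ 2 | 𝒢 (τ i)]) ω := h4
    have hval : (Pr[f j | 𝒢 (τ i)]) ω
        = g ω ^ 2 + (2 * g ω * 0 + (Pr[fun ω => d ω ^ 2 | 𝒢 (τ i)]) ω) := by
      rw [h1, h3, h0', e2]
    show f i ω ≤ (Pr[f j | 𝒢 (τ i)]) ω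
    rw [hval]
    have hfi : f i ω = g ω ^ 2 := rfl
    rw [hfi]
    linarith
  have hnonneg : (0 : ℕ → Ω → ℝ) ≤ f := fun k ω => sq_nonneg _
  have hmax := maximal_ineq hsubm hnonneg (ε := δ ^ 2) n
  set S := {ω | ((δ ^ 2 : ℝ≥0) : ℝ) ≤
      (Finset.range (n + 1)).sup' Finset.nonempty_range_add_one fun k => f k ω} with hS
  have hsubset : {ω | ∃ t ∈ F, (δ:ℝ) ≤ |M t ω - M a ω|} ⊆ S := by
    rintro ω ⟨t, htF, hδt⟩
    have hts : t ∈ s := Finset.mem_insert_of_mem htF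
    set k0 : Fin s.card := (s.orderIsoOfFin rfl).symm ⟨t, hts⟩ with hk0
    have hτk0 : τ k0.val = t := by
      have : (s.orderIsoOfFin rfl) ⟨k0.val, k0.isLt⟩ = ⟨t, hts⟩ := by
        rw [show (⟨k0.val, k0.isLt⟩ : Fin s.card) = k0 from rfl, hk0]
        exact (s.orderIsoOfFin rfl).apply_symm_apply _
      simp only [hτdef, dif_pos k0.isLt, this]
    have hmemrange : k0.val ∈ Finset.range (n + 1) :=
      Finset.mem_range.mpr (lt_of_lt_of_le k0.isLt (Nat.le_succ _))
    have hle : ((δ ^ 2 : ℝ≥0) : ℝ) ≤ f k0.val ω := by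
      push_cast
      calc (δ:ℝ) ^ 2 ≤ |M t ω - M a ω| ^ 2 := by
            exact pow_le_pow_left₀ δ.coe_nonneg hδt 2
        _ = (M t ω - M a ω) ^ 2 := sq_abs _
        _ = f k0.val ω := by rw [hfdef]; simp [hτk0]
    exact le_trans hle (Finset.le_sup' (fun k => f k ω) hmemrange)
  have hms : ∫ ω in S, f n ω ∂Pr ≤ ∫ ω, f n ω ∂Pr :=
    setIntegral_le_integral (hint n) (Filter.Eventually.of_forall fun ω => sq_nonneg _)
  have hPrS : Pr S ≤ ENNReal.ofReal (∫ ω, f n ω ∂Pr) / ((δ ^ 2 : ℝ≥0) : ℝ≥0∞) := by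
    rw [ENNReal.le_div_iff_mul_le (Or.inl ?h1) (Or.inl ENNReal.coe_ne_top)]
    case h1 => exact_mod_cast (pow_pos hδ 2).ne'
    calc Pr S * ((δ ^ 2 : ℝ≥0) : ℝ≥0∞) = (δ ^ 2 : ℝ≥0) • Pr S := by
          rw [mul_comm]; rfl
      _ ≤ ENNReal.ofReal (∫ ω in S, f n ω ∂Pr) := hmax
      _ ≤ ENNReal.ofReal (∫ ω, f n ω ∂Pr) := ENNReal.ofReal_le_ofReal hms
  have hfn : (fun ω => f n ω) = fun ω => (M b ω - M a ω) ^ 2 := by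
    funext ω; rw [hfdef]; simp [hτ_n]
  calc Pr {ω | ∃ t ∈ F, (δ:ℝ) ≤ |M t ω - M a ω|} ≤ Pr S := measure_mono hsubset
    _ ≤ ENNReal.ofReal (∫ ω, f n ω ∂Pr) / ((δ ^ 2 : ℝ≥0) : ℝ≥0∞) := hPrS
    _ = ENNReal.ofReal (∫ ω, (M b ω - M a ω) ^ 2 ∂Pr) / ((δ ^ 2 : ℝ≥0) : ℝ≥0∞) := by
        rw [show (∫ ω, f n ω ∂Pr) = ∫ ω, (M b ω - M a ω) ^ 2 ∂Pr by rw [hfn]]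
end Doob

section MSq
variable {Ω : Type*} {m0 : MeasurableSpace Ω} (Pr : Measure Ω)
    [IsProbabilityMeasure Pr]
    (𝒢 : MeasureTheory.Filtration ℝ≥0 m0)
    (M : ℝ≥0 → Ω → ℝ)

lemma msq_bound (hmart : Martingale M 𝒢 Pr) (hM0 : ∀ ω, M 0 ω = 0)
    (hsq : ∀ t : ℝ≥0, Integrable (fun ω => (M t ω) ^ 2) Pr)
    {B : ℝ} (hB : ∀ n : ℕ, 1 ≤ n →
      ∫ ω, (M (n : ℝ≥0) ω - M ((n : ℝ≥0) - 1) ω) ^ 2 ∂Pr ≤ B) (N : ℕ) :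
    ∫ ω, (M (N : ℝ≥0) ω) ^ 2 ∂Pr ≤ (N : ℝ) ^ 2 * B := by
  have htel : ∀ ω, M (N : ℝ≥0) ω = ∑ i ∈ Finset.range N,
      (M ((i + 1 : ℕ) : ℝ≥0) ω - M ((i : ℕ) : ℝ≥0) ω) := by
    intro ω
    rw [Finset.sum_range_sub (fun i : ℕ => M (i : ℝ≥0) ω)]
    simp [hM0 ω]
  have hpt : ∀ ω, (M (N : ℝ≥0) ω) ^ 2 ≤
      (N : ℝ) * ∑ i ∈ Finset.range N, (M ((i + 1 : ℕ) : ℝ≥0) ω - M ((i : ℕ) : ℝ≥0) ω) ^ 2 := by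
    intro ω
    rw [htel ω]
    have := sq_sum_le_card_mul_sum_sq (s := Finset.range N)
      (f := fun i => M ((i + 1 : ℕ) : ℝ≥0) ω - M ((i : ℕ) : ℝ≥0) ω)
    simpa using this
  have hint : ∀ i : ℕ, Integrable
      (fun ω => (M ((i + 1 : ℕ) : ℝ≥0) ω - M ((i : ℕ) : ℝ≥0) ω) ^ 2) Pr :=
    fun i => int_sq_sub Pr 𝒢 M hmart hsq _ _
  calc ∫ ω, (M (N : ℝ≥0) ω) ^ 2 ∂Pr
      ≤ ∫ ω, (N : ℝ) * ∑ i ∈ Finset.range N,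
          (M ((i + 1 : ℕ) : ℝ≥0) ω - M ((i : ℕ) : ℝ≥0) ω) ^ 2 ∂Pr := by
        refine integral_mono (hsq _) ?_ hpt
        exact (integrable_finset_sum _ fun i _ => hint i).const_mul _
    _ = (N : ℝ) * ∑ i ∈ Finset.range N,
          ∫ ω, (M ((i + 1 : ℕ) : ℝ≥0) ω - M ((i : ℕ) : ℝ≥0) ω) ^ 2 ∂Pr := by
        rw [integral_const_mul, integral_finset_sum _ fun i _ => hint i]
    _ ≤ (N : ℝ) * ((N : ℝ) * B) := by
        have hterm : ∀ i ∈ Finset.range N,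
            ∫ ω, (M ((i + 1 : ℕ) : ℝ≥0) ω - M ((i : ℕ) : ℝ≥0) ω) ^ 2 ∂Pr ≤ B := by
          intro i _
          have h := hB (i + 1) (Nat.le_add_left 1 i)
          have hc1 : ((i + 1 : ℕ) : ℝ≥0) - 1 = ((i : ℕ) : ℝ≥0) := by
            push_cast
            exact add_tsub_cancel_right _ _
          rwa [hc1] at h
        have hsum := Finset.sum_le_sum hterm
        rw [Finset.sum_const, Finset.card_range, nsmul_eq_mul] at hsum
        have hN0 : (0:ℝ) ≤ (N : ℝ) := Nat.cast_nonneg N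
        nlinarith [hsum]
    _ = (N : ℝ) ^ 2 * B := by ring
end MSq
lemma gap_bound {n p q : ℝ} (hp0 : 0 < p) (hq0 : 0 < q) (hp1 : 1 ≤ p) (hpq : p ≤ q)
    (hp2 : p ^ 2 = n) (hq2 : q ^ 2 = n + 1) : 1/p - 1/q ≤ 1/(n * p) := by
  have hn : (1:ℝ) ≤ n := by nlinarith
  have hqp1 : (q - p) * (q + p) = 1 := by linear_combination hq2 - hp2
  rw [div_sub_div _ _ hp0.ne' hq0.ne', div_le_div_iff₀ (by positivity) (by positivity)]
  have hsum0 : (0:ℝ) < q + p := by linarith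
  rw [← mul_le_mul_iff_of_pos_right hsum0]
  have h1 : (1 * q - p * 1) * (n * p) * (q + p) = n * p := by
    linear_combination (n * p) * hqp1
  rw [h1]
  nlinarith [hp2, hp0, hp1, hpq, mul_pos hp0 hq0, sq_nonneg (q - p)]

theorem stmt_12 {Ω : Type*} {m0 : MeasurableSpace Ω} (Pr : Measure Ω)
    [IsProbabilityMeasure Pr]
    (𝒢 : MeasureTheory.Filtration ℝ≥0 m0)
    (M : ℝ≥0 → Ω → ℝ)
    (hmart : Martingale M 𝒢 Pr)
    (hM0 : ∀ ω, M 0 ω = 0)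
    -- right-continuity of trajectories
    (hrc : ∀ ω, ∀ t : ℝ≥0, ContinuousWithinAt (fun s => M s ω) (Set.Ici t) t)
    (hsq : ∀ t : ℝ≥0, Integrable (fun ω => (M t ω) ^ 2) Pr)
    -- the increments Z_n = M_n − M_{n−1} have uniformly bounded second moments
    (hsup : ∃ B : ℝ, ∀ n : ℕ, 1 ≤ n →
      ∫ ω, (M (n : ℝ≥0) ω - M ((n : ℝ≥0) - 1) ω) ^ 2 ∂Pr ≤ B)
    (σ : ℝ)
    -- `E[⟨M⟩_N]/N → σ²`, where `⟨M⟩_N = Σ_{k=1}^N E[Z_k²|F_{k-1}]`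
    (hqv : Tendsto (fun N : ℕ =>
        (∫ ω, (∑ k ∈ Finset.Icc 1 N,
          (Pr[fun ω' => (M (k : ℝ≥0) ω' - M ((k : ℝ≥0) - 1) ω') ^ 2|
              𝒢 ((k : ℝ≥0) - 1)]) ω) ∂Pr) / N)
      atTop (𝓝 (σ ^ 2))) :
    ∀ ε > (0:ℝ), Tendsto (fun N : ℕ =>
        Pr {ω | ε ≤ ⨆ T : (Set.Ico (N : ℝ≥0) ((N : ℝ≥0) + 1)),
          |M (T : ℝ≥0) ω / Real.sqrt ((T : ℝ≥0) : ℝ) - M (N : ℝ≥0) ω / Real.sqrt N|})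
      atTop (𝓝 (0 : ℝ≥0∞)) := by
  intro ε hε
  obtain ⟨B, hB⟩ := hsup
  have hB0 : (0:ℝ) ≤ B :=
    le_trans (integral_nonneg fun ω => sq_nonneg _) (hB 1 le_rfl)
  -- enumeration of nonnegative rationals
  obtain ⟨f, hf⟩ := exists_surjective_nat ℚ
  set e : ℕ → ℝ≥0 := fun n => Real.toNNReal ((f n : ℚ) : ℝ) with he
  have hdense : ∀ x u : ℝ≥0, x < u → ∃ n, x < e n ∧ e n < u := by
    intro x u hxu
    obtain ⟨q, hq1, hq2⟩ := exists_rat_btwn (show (x:ℝ) < (u:ℝ) from hxu)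
    have hq0 : (0:ℝ) ≤ (q:ℝ) := le_trans x.coe_nonneg hq1.le
    obtain ⟨n, rfl⟩ := hf q
    have heq : e n = Real.toNNReal ((f n : ℚ) : ℝ) := rfl
    refine ⟨n, ?_, ?_⟩
    · rw [← NNReal.coe_lt_coe, heq, Real.coe_toNNReal _ hq0]
      exact hq1
    · rw [← NNReal.coe_lt_coe, heq, Real.coe_toNNReal _ hq0]
      exact hq2
  -- the bound sequence and its convergence
  have hbound : Tendsto (fun N : ℕ =>
      ENNReal.ofReal (64 * B / ε ^ 2 / N) + ENNReal.ofReal (16 * B / ε ^ 2 / N))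
      atTop (𝓝 0) := by
    have h1 := ENNReal.tendsto_ofReal (tendsto_const_div_atTop_nhds_zero_nat (64 * B / ε ^ 2))
    have h2 := ENNReal.tendsto_ofReal (tendsto_const_div_atTop_nhds_zero_nat (16 * B / ε ^ 2))
    rw [ENNReal.ofReal_zero] at h1 h2
    simpa using h1.add h2
  refine tendsto_of_tendsto_of_tendsto_of_le_of_le' tendsto_const_nhds hbound
    (Filter.Eventually.of_forall fun N => zero_le) ?_
  filter_upwards [eventually_ge_atTop 1] with N hN1
  -- basic real facts
  have hN1R : (1:ℝ) ≤ (N:ℝ) := by exact_mod_cast hN1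
  set p : ℝ := Real.sqrt (N:ℝ) with hp
  set q : ℝ := Real.sqrt ((N:ℝ) + 1) with hq
  have hp1 : (1:ℝ) ≤ p := by
    rw [hp, show (1:ℝ) = Real.sqrt 1 by simp]
    exact Real.sqrt_le_sqrt hN1R
  have hp0 : (0:ℝ) < p := lt_of_lt_of_le zero_lt_one hp1
  have hpq : p ≤ q := Real.sqrt_le_sqrt (by linarith)
  have hq0 : (0:ℝ) < q := lt_of_lt_of_le hp0 hpq
  have hp2 : p ^ 2 = (N:ℝ) := Real.sq_sqrt (Nat.cast_nonneg N)
  have hq2 : q ^ 2 = (N:ℝ) + 1 := Real.sq_sqrt (by positivity)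
  -- thresholds
  set δA : ℝ≥0 := Real.toNNReal (ε / 8 * p) with hδA
  set δB : ℝ≥0 := Real.toNNReal (ε / 4 * ((N:ℝ) * p)) with hδB
  have hδAc : (δA : ℝ) = ε / 8 * p := Real.coe_toNNReal _ (by positivity)
  have hδBc : (δB : ℝ) = ε / 4 * ((N:ℝ) * p) := Real.coe_toNNReal _ (by positivity)
  have hδA0 : 0 < δA := by
    rw [← NNReal.coe_pos, hδAc]; positivity
  have hδB0 : 0 < δB := by
    rw [← NNReal.coe_pos, hδBc]; positivity
  -- clamped times
  set tN : ℕ → ℝ≥0 := fun n =>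
    if (N:ℝ≥0) ≤ e n ∧ e n < (N:ℝ≥0) + 1 then e n else (N:ℝ≥0) with htN
  have htN_mem : ∀ n, (N:ℝ≥0) ≤ tN n ∧ tN n ≤ (N:ℝ≥0) + 1 := by
    intro n
    by_cases h : (N:ℝ≥0) ≤ e n ∧ e n < (N:ℝ≥0) + 1
    · simp only [htN, if_pos h]; exact ⟨h.1, h.2.le⟩
    · simp only [htN, if_neg h]; exact ⟨le_rfl, le_self_add⟩
  set E : ℕ → Set Ω := fun n =>
    {ω | (δA : ℝ) ≤ |M (tN n) ω - M (N:ℝ≥0) ω|} with hE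
  set Bset : Set Ω := {ω | (δB : ℝ) ≤ |M (N:ℝ≥0) ω - M 0 ω|} with hBset
  -- inclusion
  have hincl : {ω | ε ≤ ⨆ T : (Set.Ico (N : ℝ≥0) ((N : ℝ≥0) + 1)),
        |M (T : ℝ≥0) ω / Real.sqrt ((T : ℝ≥0) : ℝ) - M (N : ℝ≥0) ω / Real.sqrt N|}
      ⊆ (⋃ n, E n) ∪ Bset := by
    intro ω hω
    simp only [Set.mem_setOf_eq] at hω
    haveI hne : Nonempty (Set.Ico (N:ℝ≥0) ((N:ℝ≥0) + 1)) :=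
      ⟨⟨(N:ℝ≥0), le_rfl, lt_add_of_pos_right _ one_pos⟩⟩
    by_cases hbdd : BddAbove (Set.range fun T : (Set.Ico (N : ℝ≥0) ((N : ℝ≥0) + 1)) =>
        |M (T : ℝ≥0) ω / Real.sqrt ((T : ℝ≥0) : ℝ) - M (N : ℝ≥0) ω / Real.sqrt N|)
    swap
    · rw [Real.iSup_of_not_bddAbove hbdd] at hω; linarith
    have hlt : ε / 2 < ⨆ T : (Set.Ico (N : ℝ≥0) ((N : ℝ≥0) + 1)),
        |M (T : ℝ≥0) ω / Real.sqrt ((T : ℝ≥0) : ℝ) - M (N : ℝ≥0) ω / Real.sqrt N| :=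
      lt_of_lt_of_le (by linarith) hω
    obtain ⟨T, hT⟩ := exists_lt_of_lt_ciSup hlt
    obtain ⟨hTN, hTN1⟩ := T.2
    set x : ℝ := ((T : ℝ≥0) : ℝ) with hx
    set r : ℝ := Real.sqrt x with hr
    have hNx : (N:ℝ) ≤ x := by
      rw [hx, ← NNReal.coe_natCast, NNReal.coe_le_coe]; exact hTN
    have hxN1 : x ≤ (N:ℝ) + 1 := by
      have := hTN1.le
      rw [← NNReal.coe_le_coe] at this
      push_cast at this
      linarith [this]
    have hpr : p ≤ r := Real.sqrt_le_sqrt hNx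
    have hrq : r ≤ q := Real.sqrt_le_sqrt hxN1
    have hr0 : (0:ℝ) < r := lt_of_lt_of_le hp0 hpr
    set mT : ℝ := M (T : ℝ≥0) ω with hmT
    set mN : ℝ := M (N:ℝ≥0) ω with hmN
    have hT' : ε / 2 < |mT / r - mN / p| := by
      have : Real.sqrt ((N:ℕ):ℝ) = p := rfl
      exact hT
    -- decomposition
    have hmain : mT / r - mN / p = (mT - mN) / r + mN * (1/r - 1/p) := by
      field_simp
      ring
    have h2 : |(mT - mN) / r| ≤ |mT - mN| / p := by
      rw [abs_div, abs_of_pos hr0, div_le_div_iff₀ hr0 hp0]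
      exact mul_le_mul_of_nonneg_left hpr (abs_nonneg _)
    have h3 : |mN * (1/r - 1/p)| = |mN| * (1/p - 1/r) := by
      rw [abs_mul]
      congr 1
      rw [abs_of_nonpos ?hneg]
      · ring
      case hneg =>
        have : 1/r ≤ 1/p := one_div_le_one_div_of_le hp0 hpr
        linarith
    have h4 : |mN| * (1/p - 1/r) ≤ |mN| * (1/p - 1/q) := by
      have h1q : 1/q ≤ 1/r := one_div_le_one_div_of_le hr0 hrq
      exact mul_le_mul_of_nonneg_left (by linarith) (abs_nonneg mN)
    have hdecomp : |mT / r - mN / p| ≤ |mT - mN| / p + |mN| * (1/p - 1/q) := by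
      calc |mT / r - mN / p| = |(mT - mN) / r + mN * (1/r - 1/p)| := by rw [hmain]
        _ ≤ |(mT - mN) / r| + |mN * (1/r - 1/p)| := abs_add_le _ _
        _ ≤ |mT - mN| / p + |mN| * (1/p - 1/q) := by rw [h3]; linarith
    by_cases hcase : ε / 4 ≤ |mN| * (1/p - 1/q)
    · -- B case
      right
      have hc : 1/p - 1/q ≤ 1/((N:ℝ) * p) := gap_bound hp0 hq0 hp1 hpq hp2 hq2
      have hmN' : ε / 4 * ((N:ℝ) * p) ≤ |mN| := by
        have h5 : |mN| * (1/p - 1/q) ≤ |mN| * (1/((N:ℝ) * p)) :=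
          mul_le_mul_of_nonneg_left hc (abs_nonneg mN)
        have h6 : ε / 4 ≤ |mN| * (1/((N:ℝ) * p)) := le_trans hcase h5
        rw [mul_one_div] at h6
        rw [le_div_iff₀ (by positivity)] at h6
        linarith
      show ω ∈ Bset
      rw [hBset]
      simp only [Set.mem_setOf_eq]
      rw [hM0 ω, sub_zero, hδBc]
      exact hmN'
    · -- A case
      left
      have hA : ε / 4 < |mT - mN| / p := by linarith
      have hA' : ε / 4 * p < |mT - mN| := by
        rw [lt_div_iff₀ hp0] at hA
        linarith
      have hrc' : ContinuousWithinAt (fun s => |M s ω - M (N:ℝ≥0) ω|)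
          (Set.Ici (T:ℝ≥0)) (T:ℝ≥0) :=
        ((hrc ω (T:ℝ≥0)).sub continuousWithinAt_const).abs
      have hgt : ε / 8 * p < |M (T:ℝ≥0) ω - M (N:ℝ≥0) ω| := by
        rw [← hmT, ← hmN]
        have h8 : ε / 8 * p < ε / 4 * p :=
          mul_lt_mul_of_pos_right (by linarith) hp0
        linarith
      have hev : ∀ᶠ s in nhdsWithin (T:ℝ≥0) (Set.Ici (T:ℝ≥0)),
          ε / 8 * p < |M s ω - M (N:ℝ≥0) ω| :=
        hrc'.eventually (eventually_gt_nhds hgt)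
      obtain ⟨u, hTu, hsubu⟩ :=
        (nhdsGE_basis_of_exists_gt ⟨(N:ℝ≥0) + 1, hTN1⟩).eventually_iff.mp hev
      have hlo : (T:ℝ≥0) < min u ((N:ℝ≥0) + 1) := lt_min hTu hTN1
      obtain ⟨n, hn1, hn2⟩ := hdense _ _ hlo
      have hen_u : e n < u := lt_of_lt_of_le hn2 (min_le_left _ _)
      have henN1 : e n < (N:ℝ≥0) + 1 := lt_of_lt_of_le hn2 (min_le_right _ _)
      have henN : (N:ℝ≥0) ≤ e n := le_trans hTN hn1.le
      have hP : ε / 8 * p < |M (e n) ω - M (N:ℝ≥0) ω| :=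
        hsubu ⟨hn1.le, hen_u⟩
      refine Set.mem_iUnion.mpr ⟨n, ?_⟩
      show (δA : ℝ) ≤ |M (tN n) ω - M (N:ℝ≥0) ω|
      rw [show tN n = e n from if_pos ⟨henN, henN1⟩, hδAc]
      exact hP.le
  -- measure of Bset
  have hMN1 : ∫ ω', (M ((N:ℝ≥0) + 1) ω' - M (N:ℝ≥0) ω') ^ 2 ∂Pr ≤ B := by
    have h := hB (N + 1) (Nat.le_add_left 1 N)
    have hc1 : ((N + 1 : ℕ) : ℝ≥0) = (N:ℝ≥0) + 1 := by push_cast; ring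
    have hc2 : ((N + 1 : ℕ) : ℝ≥0) - 1 = (N:ℝ≥0) := by
      rw [hc1]; exact add_tsub_cancel_right _ _
    rwa [hc2, hc1] at h
  have hPrB : Pr Bset ≤ ENNReal.ofReal (16 * B / ε ^ 2 / N) := by
    have hd := doob_l2 Pr 𝒢 M hmart hsq 0 (N:ℝ≥0) {(N:ℝ≥0)}
      (fun t ht => by
        rw [Finset.mem_singleton] at ht
        subst ht
        exact ⟨zero_le, le_rfl⟩) zero_le δB hδB0
    have hseteq : Bset = {ω | ∃ t ∈ ({(N:ℝ≥0)} : Finset ℝ≥0), (δB:ℝ) ≤ |M t ω - M 0 ω|} := by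
      ext ω
      simp [hBset]
    have hIeq : ∫ ω, (M (N:ℝ≥0) ω - M 0 ω) ^ 2 ∂Pr = ∫ ω, (M (N:ℝ≥0) ω) ^ 2 ∂Pr := by
      congr 1
      funext ω
      rw [hM0 ω, sub_zero]
    have hI : ∫ ω, (M (N:ℝ≥0) ω - M 0 ω) ^ 2 ∂Pr ≤ (N:ℝ) ^ 2 * B := by
      rw [hIeq]
      exact msq_bound Pr 𝒢 M hmart hM0 hsq hB N
    have hcoe : ((δB ^ 2 : ℝ≥0) : ℝ≥0∞) = ENNReal.ofReal (ε ^ 2 * (N:ℝ) ^ 3 / 16) := by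
      rw [← ENNReal.ofReal_coe_nnreal]
      congr 1
      push_cast [hδBc]
      linear_combination (ε ^ 2 * (N:ℝ) ^ 2 / 16) * hp2
    calc Pr Bset ≤ ENNReal.ofReal (∫ ω, (M (N:ℝ≥0) ω - M 0 ω) ^ 2 ∂Pr) /
          ((δB ^ 2 : ℝ≥0) : ℝ≥0∞) := by rw [hseteq]; exact hd
      _ ≤ ENNReal.ofReal ((N:ℝ) ^ 2 * B) / ((δB ^ 2 : ℝ≥0) : ℝ≥0∞) :=
          ENNReal.div_le_div_right (ENNReal.ofReal_le_ofReal hI) _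
      _ = ENNReal.ofReal ((N:ℝ) ^ 2 * B / (ε ^ 2 * (N:ℝ) ^ 3 / 16)) := by
          rw [hcoe, ← ENNReal.ofReal_div_of_pos (by positivity)]
      _ = ENNReal.ofReal (16 * B / ε ^ 2 / N) := by
          congr 1
          field_simp
  -- measure of the union of the E n
  have hPrA : Pr (⋃ n, E n) ≤ ENNReal.ofReal (64 * B / ε ^ 2 / N) := by
    rw [measure_iUnion_eq_iSup_accumulate]
    refine iSup_le fun m => ?_
    classical
    set Fm : Finset ℝ≥0 := Finset.image tN (Finset.range (m + 1)) with hFm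
    have hsubm : Set.accumulate E m ⊆
        {ω | ∃ t ∈ Fm, (δA:ℝ) ≤ |M t ω - M (N:ℝ≥0) ω|} := by
      intro ω hω
      rw [Set.mem_accumulate] at hω
      obtain ⟨j, hjm, hj⟩ := hω
      exact ⟨tN j, Finset.mem_image_of_mem _ (Finset.mem_range.mpr (Nat.lt_succ_of_le hjm)), hj⟩
    have hFmem : ∀ t ∈ Fm, (N:ℝ≥0) ≤ t ∧ t ≤ (N:ℝ≥0) + 1 := by
      intro t ht
      rw [hFm, Finset.mem_image] at ht
      obtain ⟨j, _, rfl⟩ := ht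
      exact htN_mem j
    have hd := doob_l2 Pr 𝒢 M hmart hsq (N:ℝ≥0) ((N:ℝ≥0) + 1) Fm hFmem le_self_add δA hδA0
    have hcoe : ((δA ^ 2 : ℝ≥0) : ℝ≥0∞) = ENNReal.ofReal (ε ^ 2 * (N:ℝ) / 64) := by
      rw [← ENNReal.ofReal_coe_nnreal]
      congr 1
      push_cast [hδAc]
      linear_combination (ε ^ 2 / 64) * hp2
    calc Pr (Set.accumulate E m)
        ≤ Pr {ω | ∃ t ∈ Fm, (δA:ℝ) ≤ |M t ω - M (N:ℝ≥0) ω|} := measure_mono hsubm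
      _ ≤ ENNReal.ofReal (∫ ω, (M ((N:ℝ≥0) + 1) ω - M (N:ℝ≥0) ω) ^ 2 ∂Pr) /
            ((δA ^ 2 : ℝ≥0) : ℝ≥0∞) := hd
      _ ≤ ENNReal.ofReal B / ((δA ^ 2 : ℝ≥0) : ℝ≥0∞) :=
          ENNReal.div_le_div_right (ENNReal.ofReal_le_ofReal hMN1) _
      _ = ENNReal.ofReal (B / (ε ^ 2 * (N:ℝ) / 64)) := by
          rw [hcoe, ← ENNReal.ofReal_div_of_pos (by positivity)]
      _ = ENNReal.ofReal (64 * B / ε ^ 2 / N) := by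
          congr 1
          field_simp
  calc Pr {ω | ε ≤ ⨆ T : (Set.Ico (N : ℝ≥0) ((N : ℝ≥0) + 1)),
        |M (T : ℝ≥0) ω / Real.sqrt ((T : ℝ≥0) : ℝ) - M (N : ℝ≥0) ω / Real.sqrt N|}
      ≤ Pr ((⋃ n, E n) ∪ Bset) := measure_mono hincl
    _ ≤ Pr (⋃ n, E n) + Pr Bset := measure_union_le _ _
    _ ≤ ENNReal.ofReal (64 * B / ε ^ 2 / N) + ENNReal.ofReal (16 * B / ε ^ 2 / N) :=
        add_le_add hPrA hPrB
end

section
/- Let {X_t} be a Markov process on Polish E satisfying the Wasserstein contraction hypothesis with initial law μ₀ ∈ P₁(E) and invariant law μ* ∈ P₁(E). For a Lipschitz ψ and L > 0 define ψ^{(L)} := |ψ − ψ_L| where ψ_L is the truncation of ψ at level L. Then lim_{L→∞} limsup_{t→∞} E[ψ^{(L)}(X_t)] = 0. -/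
open MeasureTheory Filter
open scoped Topology

/-- Wasserstein-1 distance via Kantorovich duality: supremum over 1-Lipschitz functions. -/
noncomputable def wdist {E : Type*} [MetricSpace E] [MeasurableSpace E]
    (μ ν : Measure E) : ℝ :=
  ⨆ f : {f : E → ℝ // LipschitzWith 1 f}, |∫ x, f.1 x ∂μ - ∫ x, f.1 x ∂ν|

/-- `μ ∈ P₁(E)`: a Borel probability measure with finite first moment. -/
def memP1 {E : Type*} [MetricSpace E] [MeasurableSpace E] (x₀ : E) (μ : Measure E) : Prop :=
  IsProbabilityMeasure μ ∧ Integrable (fun x => dist x x₀) μ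

lemma aux_clamp {L y : ℝ} (hL : 0 ≤ L) :
    |y - max (-L) (min L y)| = max (|y| - L) 0 := by
  rcases le_total y (-L) with h | h
  · rw [max_eq_left ((min_le_right L y).trans h), abs_of_nonpos (by linarith),
      abs_of_nonpos (by linarith), max_eq_left (by linarith)]
    ring
  · rcases le_total L y with h2 | h2
    · rw [min_eq_left h2, max_eq_right (by linarith), abs_of_nonneg (by linarith)]
      rw [abs_of_nonneg (by linarith), max_eq_left (by linarith)]
    · rw [min_eq_right h2, max_eq_right h, sub_self, abs_zero,
        max_eq_right (by rcases abs_cases y with ⟨h3,_⟩|⟨h3,_⟩ <;> linarith)]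

lemma aux_integrable {E : Type*} [MetricSpace E] [MeasurableSpace E] [BorelSpace E]
    {x₀ : E} {μ : Measure E} (hμ : memP1 x₀ μ) {f : E → ℝ} (hf : Continuous f)
    {C : ℝ} (hfl : ∀ x y, |f x - f y| ≤ C * dist x y) : Integrable f μ := by
  haveI := hμ.1
  refine Integrable.mono' ((integrable_const |f x₀|).add (hμ.2.const_mul C))
    hf.aestronglyMeasurable (ae_of_all _ fun x => ?_)
  have := hfl x x₀
  have : |f x| ≤ |f x₀| + C * dist x x₀ := by
    have h2 := abs_sub_abs_le_abs_sub (f x) (f x₀); linarith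
  simpa using this

lemma aux_dual_bound {E : Type*} [MetricSpace E] [MeasurableSpace E] [BorelSpace E]
    {x₀ : E} {μ ν : Measure E} (hμ : memP1 x₀ μ) (hν : memP1 x₀ ν)
    {f : E → ℝ} (hf : LipschitzWith 1 f) :
    |∫ x, f x ∂μ - ∫ x, f x ∂ν| ≤ ∫ x, dist x x₀ ∂μ + ∫ x, dist x x₀ ∂ν := by
  haveI := hμ.1; haveI := hν.1
  have hfl : ∀ x y : E, |f x - f y| ≤ 1 * dist x y := by
    intro x y
    have := hf.dist_le_mul x y
    rwa [Real.dist_eq, NNReal.coe_one] at this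
  have hintμ : Integrable f μ := aux_integrable hμ hf.continuous hfl
  have hintν : Integrable f ν := aux_integrable hν hf.continuous hfl
  have key : ∫ x, f x ∂μ - ∫ x, f x ∂ν
      = (∫ x, f x - f x₀ ∂μ) - ∫ x, f x - f x₀ ∂ν := by
    rw [integral_sub hintμ (integrable_const _), integral_sub hintν (integrable_const _),
      integral_const, integral_const]
    simp
  rw [key]
  have b1 : ∀ (ρ : Measure E), IsProbabilityMeasure ρ → Integrable (fun x => dist x x₀) ρ →
      Integrable f ρ → |∫ x, f x - f x₀ ∂ρ| ≤ ∫ x, dist x x₀ ∂ρ := by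
    intro ρ _ hd hi
    calc |∫ x, f x - f x₀ ∂ρ| ≤ ∫ x, |f x - f x₀| ∂ρ := by
          simpa [Real.norm_eq_abs] using norm_integral_le_integral_norm (fun x => f x - f x₀)
      _ ≤ ∫ x, dist x x₀ ∂ρ := by
          refine integral_mono ((hi.sub (integrable_const _)).abs) hd fun x => ?_
          simpa using hfl x x₀
  have h1 := b1 μ hμ.1 hμ.2 hintμ
  have h2 := b1 ν hν.1 hν.2 hintν
  calc |(∫ x, f x - f x₀ ∂μ) - ∫ x, f x - f x₀ ∂ν|
      ≤ |∫ x, f x - f x₀ ∂μ| + |∫ x, f x - f x₀ ∂ν| := abs_sub _ _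
    _ ≤ _ := add_le_add h1 h2

lemma aux_bddAbove {E : Type*} [MetricSpace E] [MeasurableSpace E] [BorelSpace E]
    {x₀ : E} {μ ν : Measure E} (hμ : memP1 x₀ μ) (hν : memP1 x₀ ν) :
    BddAbove (Set.range fun f : {f : E → ℝ // LipschitzWith 1 f} =>
      |∫ x, f.1 x ∂μ - ∫ x, f.1 x ∂ν|) :=
  ⟨∫ x, dist x x₀ ∂μ + ∫ x, dist x x₀ ∂ν, by
    rintro r ⟨f, rfl⟩; exact aux_dual_bound hμ hν f.2⟩

lemma aux_le_wdist {E : Type*} [MetricSpace E] [MeasurableSpace E] [BorelSpace E]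
    {x₀ : E} {μ ν : Measure E} (hμ : memP1 x₀ μ) (hν : memP1 x₀ ν)
    {f : E → ℝ} (hf : LipschitzWith 1 f) :
    |∫ x, f x ∂μ - ∫ x, f x ∂ν| ≤ wdist μ ν :=
  le_ciSup (aux_bddAbove hμ hν) (⟨f, hf⟩ : {f : E → ℝ // LipschitzWith 1 f})

theorem stmt_19 {E Ω : Type*} [MetricSpace E] [CompleteSpace E]
    [TopologicalSpace.SeparableSpace E] [Nonempty E]
    [MeasurableSpace E] [BorelSpace E]
    {m0 : MeasurableSpace Ω} (Pr : Measure Ω) [IsProbabilityMeasure Pr]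
    (X : ℝ → Ω → E) (hX : ∀ t : ℝ, Measurable (X t))
    (P : ℝ → Measure E → Measure E) (x₀ : E)
    (hsemi : ∀ s t : ℝ, 0 ≤ s → 0 ≤ t → ∀ μ : Measure E, P (s + t) μ = P s (P t μ))
    (hpres : ∀ t : ℝ, 0 ≤ t → ∀ μ : Measure E, memP1 x₀ μ → memP1 x₀ (P t μ))
    (c γ : ℝ) (hc : 0 < c) (hγ : 0 < γ)
    (hcontr : ∀ t : ℝ, 0 ≤ t → ∀ μ ν : Measure E, memP1 x₀ μ → memP1 x₀ ν →
      wdist (P t μ) (P t ν) ≤ c * Real.exp (-γ * t) * wdist μ ν)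
    (μ₀ : Measure E) (hμ₀ : memP1 x₀ μ₀)
    (hlaw : ∀ t : ℝ, 0 ≤ t → Measure.map (X t) Pr = P t μ₀)
    (μstar : Measure E) (hstar : memP1 x₀ μstar)
    (hinv : ∀ t : ℝ, 0 ≤ t → P t μstar = μstar)
    (ψ : E → ℝ) (K : ℝ) (hK : 0 ≤ K)
    (hψ : ∀ x y : E, |ψ x - ψ y| ≤ K * dist x y) :
    -- `lim_{L→∞} limsup_{t→∞} E[ |ψ(X_t) − ψ_L(X_t)| ] = 0`, where `ψ_L` is the
    -- truncation of `ψ` at level `L`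
    ∀ ε > (0:ℝ), ∃ L₀ : ℝ, ∀ L : ℝ, L₀ ≤ L → ∃ T : ℝ, ∀ t : ℝ, T ≤ t →
      ∫ ω, |ψ (X t ω) - max (-L) (min L (ψ (X t ω)))| ∂Pr < ε := by
  intro ε hε
  haveI := hstar.1
  set K' : ℝ := max K 1 with hK'def
  have hK'pos : 0 < K' := lt_of_lt_of_le one_pos (le_max_right _ _)
  have hψ' : ∀ x y : E, |ψ x - ψ y| ≤ K' * dist x y := fun x y =>
    (hψ x y).trans (mul_le_mul_of_nonneg_right (le_max_left _ _) dist_nonneg)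
  have hψc : Continuous ψ := by
    have : LipschitzWith (Real.toNNReal K') ψ := by
      refine LipschitzWith.of_dist_le_mul fun x y => ?_
      rw [Real.dist_eq, Real.coe_toNNReal _ hK'pos.le]
      exact hψ' x y
    exact this.continuous
  set φ : ℝ → E → ℝ := fun L x => max (|ψ x| - L) 0 with hφdef
  have hφcont : ∀ L, Continuous (φ L) := fun L =>
    ((continuous_abs.comp hψc).sub continuous_const).max continuous_const
  have hφlip : ∀ L x y, |φ L x - φ L y| ≤ K' * dist x y := by
    intro L x y
    calc |φ L x - φ L y| ≤ |(|ψ x| - L) - (|ψ y| - L)| := abs_max_sub_max_le_abs _ _ _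
      _ = abs (|ψ x| - |ψ y|) := by ring_nf
      _ ≤ |ψ x - ψ y| := abs_abs_sub_abs_le_abs_sub _ _
      _ ≤ K' * dist x y := hψ' x y
  have hφint : ∀ {μ : Measure E}, memP1 x₀ μ → ∀ L, Integrable (φ L) μ := fun hμ L =>
    aux_integrable hμ (hφcont L) (hφlip L)
  have hψint : Integrable (fun x => |ψ x|) μstar := (aux_integrable hstar hψc hψ').abs
  -- dominated convergence to choose L₀
  have hDC : Tendsto (fun n : ℕ => ∫ x, φ n x ∂μstar) atTop (𝓝 0) := by
    have := tendsto_integral_of_dominated_convergence (F := fun (n : ℕ) => φ n)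
      (f := fun _ => (0 : ℝ)) (bound := fun x => |ψ x|)
      (fun n => (hφcont n).aestronglyMeasurable) hψint
      (fun n => ae_of_all _ fun x => by
        rw [Real.norm_eq_abs, abs_of_nonneg (le_max_right _ _)]
        exact max_le (by simp [abs_nonneg]) (abs_nonneg _))
      (ae_of_all _ fun x => by
        refine Tendsto.congr' ?_ tendsto_const_nhds
        filter_upwards [eventually_ge_atTop ⌈|ψ x|⌉₊] with n hn
        have : |ψ x| ≤ (n : ℝ) := (Nat.le_ceil _).trans (Nat.cast_le.2 hn)
        simp [hφdef, max_eq_right, sub_nonpos.2 this])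
    simpa using this
  obtain ⟨n₀, hn₀⟩ := (hDC.eventually (gt_mem_nhds (half_pos hε))).exists
  refine ⟨(n₀ : ℝ), fun L hL => ?_⟩
  have hL0 : (0:ℝ) ≤ L := le_trans (Nat.cast_nonneg _) hL
  have hJ : ∫ x, φ L x ∂μstar < ε / 2 := by
    refine lt_of_le_of_lt (integral_mono (hφint hstar L) (hφint hstar n₀) fun x => ?_) hn₀
    exact max_le_max (by linarith) le_rfl
  -- choose T
  set W : ℝ := wdist μ₀ μstar with hWdef
  have he : Tendsto (fun t : ℝ => Real.exp (-γ * t)) atTop (𝓝 0) := by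
    apply Real.tendsto_exp_atBot.comp
    exact Tendsto.const_mul_atTop_of_neg (neg_lt_zero.2 hγ) tendsto_id
  have hTend : Tendsto (fun t : ℝ => K' * c * W * Real.exp (-γ * t)) atTop (𝓝 0) := by
    simpa using he.const_mul (K' * c * W)
  obtain ⟨T, hT⟩ := eventually_atTop.1
    ((hTend.eventually (gt_mem_nhds (half_pos hε))).and (eventually_ge_atTop (0:ℝ)))
  refine ⟨T, fun t ht => ?_⟩
  obtain ⟨hTexp, ht0⟩ := hT t ht
  have hPt : memP1 x₀ (P t μ₀) := hpres t ht0 μ₀ hμ₀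
  haveI := hPt.1
  -- rewrite the expectation
  have hgoal : ∫ ω, |ψ (X t ω) - max (-L) (min L (ψ (X t ω)))| ∂Pr
      = ∫ x, φ L x ∂(P t μ₀) := by
    rw [← hlaw t ht0,
      integral_map (hX t).aemeasurable ((hφcont L).aestronglyMeasurable)]
    exact integral_congr_ae (ae_of_all _ fun ω => aux_clamp hL0)
  rw [hgoal]
  -- Lipschitz-1 test function
  set f : E → ℝ := fun x => φ L x * K'⁻¹ with hfdef
  have hflip : LipschitzWith 1 f := by
    refine LipschitzWith.of_dist_le_mul fun x y => ?_
    rw [Real.dist_eq, NNReal.coe_one, one_mul]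
    have h1 : |f x - f y| = |φ L x - φ L y| * K'⁻¹ := by
      rw [hfdef]; rw [← sub_mul, abs_mul, abs_of_nonneg (inv_nonneg.2 hK'pos.le)]
    rw [h1]
    have := hφlip L x y
    rw [inv_eq_one_div]
    rw [mul_one_div, div_le_iff₀ hK'pos]
    nlinarith [dist_nonneg (x := x) (y := y)]
  have hdual : |(∫ x, f x ∂(P t μ₀)) - ∫ x, f x ∂μstar| ≤ wdist (P t μ₀) μstar :=
    aux_le_wdist hPt hstar hflip
  have hfint : ∀ (ρ : Measure E), ∫ x, f x ∂ρ = (∫ x, φ L x ∂ρ) * K'⁻¹ := fun ρ =>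
    integral_mul_const _ _
  rw [hfint, hfint] at hdual
  have habs : |(∫ x, φ L x ∂(P t μ₀)) - ∫ x, φ L x ∂μstar| ≤ K' * wdist (P t μ₀) μstar := by
    rw [← sub_mul, abs_mul, abs_of_nonneg (inv_nonneg.2 hK'pos.le)] at hdual
    calc |(∫ x, φ L x ∂(P t μ₀)) - ∫ x, φ L x ∂μstar|
        = |(∫ x, φ L x ∂(P t μ₀)) - ∫ x, φ L x ∂μstar| * K'⁻¹ * K' := by
          field_simp
      _ ≤ wdist (P t μ₀) μstar * K' := mul_le_mul_of_nonneg_right hdual hK'pos.le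
      _ = K' * wdist (P t μ₀) μstar := mul_comm _ _
  have hw : wdist (P t μ₀) μstar ≤ c * Real.exp (-γ * t) * W := by
    have := hcontr t ht0 μ₀ μstar hμ₀ hstar
    rwa [hinv t ht0] at this
  have hKw : K' * wdist (P t μ₀) μstar < ε / 2 := by
    have h2 : K' * (c * Real.exp (-γ * t) * W) = K' * c * W * Real.exp (-γ * t) := by ring
    calc K' * wdist (P t μ₀) μstar ≤ K' * (c * Real.exp (-γ * t) * W) :=
          mul_le_mul_of_nonneg_left hw hK'pos.le
      _ = K' * c * W * Real.exp (-γ * t) := h2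
      _ < ε / 2 := hTexp
  have := abs_le.1 habs
  linarith [this.2]
end
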